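/- For unitary operators U, V on a finite-dimensional Hilbert space and unit vector ψ, there exists a real number x such that (1/2)‖(U - e^{ix}V)ψ‖² ≤ D_ψ(U,V)² ≤ ‖(U - V)ψ‖². -/

import Mathlib

open scoped InnerProductSpace

variable {H : Type*} [NormedAddCommGroup H] [InnerProductSpace ℂ H] [FiniteDimensional ℂ H]

noncomputable def Dpsi (U V : H →L[ℂ] H) (ψ : H) : ℝ :=
  Real.sqrt (1 - ‖⟪ψ, (star U * V) ψ⟫_ℂ‖ ^ 2)

noncomputable def uDist (U V : H →L[ℂ] H) : ℝ :=
  sSup {d : ℝ | ∃ ψ : H, ‖ψ‖ = 1 ∧ d = Dpsi U V ψ}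

theorem stmt_2 (U V : H →L[ℂ] H) (hU : U ∈ unitary (H →L[ℂ] H))
    (hV : V ∈ unitary (H →L[ℂ] H)) (ψ : H) (hψ : ‖ψ‖ = 1) :
    ∃ x : ℝ,
      (1 / 2) * ‖(U - Complex.exp ((x : ℂ) * Complex.I) • V) ψ‖ ^ 2 ≤ Dpsi U V ψ ^ 2 ∧
        Dpsi U V ψ ^ 2 ≤ ‖(U - V) ψ‖ ^ 2 := by
  set c : ℂ := ⟪ψ, (star U * V) ψ⟫_ℂ with hc
  have hcc : c = ⟪U ψ, V ψ⟫_ℂ := by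
    rw [hc, ContinuousLinearMap.mul_apply, ContinuousLinearMap.star_eq_adjoint,
      ContinuousLinearMap.adjoint_inner_right]
  have hUn : ‖U ψ‖ = 1 := by rw [U.norm_map_of_mem_unitary hU, hψ]
  have hVn : ‖V ψ‖ = 1 := by rw [V.norm_map_of_mem_unitary hV, hψ]
  have hcle : ‖c‖ ≤ 1 := by
    calc ‖c‖ ≤ ‖U ψ‖ * ‖V ψ‖ := by rw [hcc]; exact norm_inner_le_norm _ _
    _ = 1 := by rw [hUn, hVn, mul_one]
  have hcnn : (0:ℝ) ≤ ‖c‖ := norm_nonneg c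
  have hD : Dpsi U V ψ ^ 2 = 1 - ‖c‖ ^ 2 := by
    rw [Dpsi, ← hc]
    exact Real.sq_sqrt (by nlinarith)
  refine ⟨-c.arg, ?_, ?_⟩
  · set a : ℂ := Complex.exp (((-c.arg : ℝ) : ℂ) * Complex.I) with ha
    have he : a * c = (‖c‖ : ℂ) := by
      calc a * c = a * ((‖c‖ : ℂ) * Complex.exp (c.arg * Complex.I)) := by
            rw [Complex.norm_mul_exp_arg_mul_I c]
        _ = (‖c‖ : ℂ) *
              (Complex.exp (((-c.arg : ℝ) : ℂ) * Complex.I) * Complex.exp (c.arg * Complex.I)) := by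
            rw [ha]; ring
        _ = (‖c‖ : ℂ) := by
            rw [← Complex.exp_add]
            push_cast
            ring_nf
            simp [Complex.exp_zero]
    have han : ‖a‖ = 1 := by
      rw [ha]; simpa using Complex.norm_exp_ofReal_mul_I (-c.arg)
    have hexp : ‖(U - a • V) ψ‖ ^ 2 = 2 - 2 * ‖c‖ := by
      have h0 : (U - a • V) ψ = U ψ - a • V ψ := by simp
      rw [h0, @norm_sub_sq ℂ]
      have h1 : ⟪U ψ, a • V ψ⟫_ℂ = a * c := by rw [inner_smul_right, hcc]
      rw [h1, norm_smul, han, one_mul, hUn, hVn]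
      have h2 : RCLike.re (a * c) = ‖c‖ := by
        rw [he]; simp
      rw [h2]; ring
    rw [hexp, hD]
    nlinarith
  · have hexp : ‖(U - V) ψ‖ ^ 2 = 2 - 2 * Complex.re c := by
      have h0 : (U - V) ψ = U ψ - V ψ := by simp
      rw [h0, @norm_sub_sq ℂ, hUn, hVn, ← hcc]
      simp only [RCLike.re_to_complex]
      ring
    have hre : Complex.re c ≤ ‖c‖ := Complex.re_le_norm c
    rw [hexp, hD]
    nlinarith
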